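/- For each (p, q) ∈ S¹ and r ∈ ℝ, the set L_{p,q,r} = {z ∈ ℂ³ : p z₁ + q z₂ − z₃ = i r and p·Re(z₂) − q·Re(z₁) > 0} is a convex subset of the tube Z = {z ∈ ℂ³ : Re z ∈ V} contained in an imaginary translate of the complex linear subspace {z : p z₁ + q z₂ = z₃}, and Z is the disjoint union of the sets L_{p,q,r} over (p, q, r) ∈ S¹ × ℝ (a foliation of Z by half-planes in complex hyperplanes). -/

import Mathlib

/-- For each `(p, q) ∈ S¹` and `r ∈ ℝ`, the set
`L_{p,q,r} = {z ∈ ℂ³ : p z₁ + q z₂ − z₃ = i r and p Re z₂ − q Re z₁ > 0}` is a convex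
subset of the tube `Z = {z : Re z ∈ V}` contained in the imaginary translate
`{z : p z₁ + q z₂ = z₃ + i r}` of the complex hyperplane `{z : p z₁ + q z₂ = z₃}`, and `Z`
is the disjoint union of the `L_{p,q,r}` over `(p, q, r) ∈ S¹ × ℝ`. -/
theorem stmt_15
    (Z : Set (Fin 3 → ℂ))
    (hZ : Z = {z | (z 2).re ^ 2 < (z 0).re ^ 2 + (z 1).re ^ 2})
    (L : ℝ → ℝ → ℝ → Set (Fin 3 → ℂ))
    (hL : ∀ p q r, L p q r =
      {z | (p : ℂ) * z 0 + (q : ℂ) * z 1 - z 2 = Complex.I * (r : ℂ) ∧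
           0 < p * (z 1).re - q * (z 0).re}) :
    (∀ p q r : ℝ, p ^ 2 + q ^ 2 = 1 →
        Convex ℝ (L p q r) ∧
        L p q r ⊆ Z ∧
        L p q r ⊆ {z | (p : ℂ) * z 0 + (q : ℂ) * z 1 = z 2 + Complex.I * (r : ℂ)}) ∧
    (∀ z ∈ Z, ∃! pqr : ℝ × ℝ × ℝ,
        pqr.1 ^ 2 + pqr.2.1 ^ 2 = 1 ∧ z ∈ L pqr.1 pqr.2.1 pqr.2.2) := by
  constructor
  · intro p q r hpq
    refine ⟨?_, ?_, ?_⟩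
    · rw [hL]
      intro x hx y hy θ η hθ hη hθη
      obtain ⟨hx1, hx2⟩ := hx
      obtain ⟨hy1, hy2⟩ := hy
      have hC : (θ : ℂ) + (η : ℂ) = 1 := by exact_mod_cast congrArg (Complex.ofReal) hθη
      constructor
      · simp only [Pi.add_apply, Pi.smul_apply, Complex.real_smul, Set.mem_setOf_eq]
        linear_combination (θ : ℂ) * hx1 + (η : ℂ) * hy1 + Complex.I * (r : ℂ) * hC
      · simp only [Pi.add_apply, Pi.smul_apply, Complex.real_smul, Set.mem_setOf_eq,
          Complex.add_re, Complex.re_ofReal_mul]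
        have hkey : p * (θ * (x 1).re + η * (y 1).re) - q * (θ * (x 0).re + η * (y 0).re)
            = θ * (p * (x 1).re - q * (x 0).re) + η * (p * (y 1).re - q * (y 0).re) := by
          ring
        rw [hkey]
        rcases hθ.eq_or_lt with h | h
        · have hη1 : η = 1 := by linarith
          rw [← h, hη1]
          simpa using hy2
        · exact add_pos_of_pos_of_nonneg (mul_pos h hx2) (mul_nonneg hη hy2.le)
    · intro z hz
      rw [hL] at hz
      obtain ⟨h1, h2⟩ := hz
      have hre : p * (z 0).re + q * (z 1).re - (z 2).re = 0 := by
        have := congrArg Complex.re h1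
        simpa [Complex.add_re, Complex.sub_re, Complex.re_ofReal_mul, Complex.mul_re] using this
      rw [hZ]
      simp only [Set.mem_setOf_eq]
      have key : (z 2).re ^ 2 + (p * (z 1).re - q * (z 0).re) ^ 2
          = (z 0).re ^ 2 + (z 1).re ^ 2 := by
        linear_combination (-((z 2).re + p * (z 0).re + q * (z 1).re)) * hre
          + ((z 0).re ^ 2 + (z 1).re ^ 2) * hpq
      nlinarith [pow_pos h2 2, key]
    · intro z hz
      rw [hL] at hz
      simp only [Set.mem_setOf_eq]
      linear_combination hz.1
  · intro z hz
    rw [hZ] at hz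
    simp only [Set.mem_setOf_eq] at hz
    set a := (z 0).re with ha
    set b := (z 1).re with hb
    set c := (z 2).re with hc
    have hD : 0 < a ^ 2 + b ^ 2 := by nlinarith [sq_nonneg c]
    have hDc : 0 < a ^ 2 + b ^ 2 - c ^ 2 := by linarith
    set s := Real.sqrt (a ^ 2 + b ^ 2 - c ^ 2) with hsdef
    have hs : 0 < s := Real.sqrt_pos.mpr hDc
    have hs2 : s ^ 2 = a ^ 2 + b ^ 2 - c ^ 2 := Real.sq_sqrt hDc.le
    set D := a ^ 2 + b ^ 2 with hDdef
    have hDne : D ≠ 0 := ne_of_gt hD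
    set p := (a * c + b * s) / D with hpdef
    set q := (b * c - a * s) / D with hqdef
    set r := p * (z 0).im + q * (z 1).im - (z 2).im with hrdef
    have hpa : p * a + q * b = c := by
      rw [hpdef, hqdef]
      field_simp
      ring
    have hpb : p * b - q * a = s := by
      rw [hpdef, hqdef]
      field_simp
      ring
    have hpq : p ^ 2 + q ^ 2 = 1 := by
      rw [hpdef, hqdef]
      rw [div_pow, div_pow, ← add_div, div_eq_one_iff_eq (by positivity)]
      linear_combination (a ^ 2 + b ^ 2) * hs2
    refine ⟨⟨p, q, r⟩, ⟨hpq, ?_⟩, ?_⟩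
    · rw [hL]
      refine ⟨?_, ?_⟩
      · apply Complex.ext
        · simp only [Complex.add_re, Complex.sub_re, Complex.re_ofReal_mul, Complex.mul_re,
            Complex.I_re, Complex.I_im, Complex.ofReal_re, Complex.ofReal_im]
          simpa using sub_eq_zero.mpr hpa
        · simp only [Complex.add_im, Complex.sub_im, Complex.im_ofReal_mul, Complex.mul_im,
            Complex.I_re, Complex.I_im, Complex.ofReal_re, Complex.ofReal_im]
          simp [hrdef]
      · linarith [hpb, hs]
    · rintro ⟨p', q', r'⟩ ⟨hpq', hmem⟩
      simp only [hL, Set.mem_setOf_eq] at hmem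
      obtain ⟨heq, hpos⟩ := hmem
      have hre' : p' * a + q' * b - c = 0 := by
        have := congrArg Complex.re heq
        simpa [Complex.add_re, Complex.sub_re, Complex.re_ofReal_mul, Complex.mul_re] using this
      have him' : p' * (z 0).im + q' * (z 1).im - (z 2).im = r' := by
        have := congrArg Complex.im heq
        simpa [Complex.add_im, Complex.sub_im, Complex.im_ofReal_mul, Complex.mul_im] using this
      have key2 : (p' * b - q' * a) ^ 2 = s ^ 2 := by
        linear_combination (a ^ 2 + b ^ 2) * hpq'
          - (p' * a + q' * b + c) * hre' - hs2
      have hts : p' * b - q' * a = s := by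
        nlinarith [hpos, hs, key2]
      have hp' : p' = p := by
        rw [hpdef, eq_div_iff hDne]
        linear_combination a * hre' + b * hts
      have hq' : q' = q := by
        rw [hqdef, eq_div_iff hDne]
        linear_combination b * hre' - a * hts
      have hr' : r' = r := by
        rw [hrdef, ← him', hp', hq']
      exact Prod.ext hp' (Prod.ext hq' hr')
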